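/- arXiv:1610.07550 — 2 statements merged into one kernel-verified Lean document; each statement's English description precedes it below -/
import Mathlib

section
/- The function U(t) = (2ν²/(μ_m − μ_a)) · e^{−μ_a t} · [ (μ_a − μ_m)/(μ_m(μ_a − 2μ_m)) − e^{−μ_m t}/μ_m − e^{(μ_a − 2μ_m)t}/(μ_a − 2μ_m) ] satisfies U'(t) = −μ_a U(t) + 2 ν M(t) e^{−μ_m t} with U(0) = 0, where M(t) = (ν/(μ_m − μ_a))(e^{−μ_a t} − e^{−μ_m t}), assuming μ_a ≠ μ_m, μ_m ≠ 0, and μ_a ≠ 2μ_m. -/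
open Real

/-- the closed-form second factorial moment
`U(t) = (2ν²/(μ_m − μ_a)) e^{−μ_a t} [ (μ_a − μ_m)/(μ_m(μ_a − 2μ_m)) − e^{−μ_m t}/μ_m
  − e^{(μ_a − 2μ_m)t}/(μ_a − 2μ_m) ]`
satisfies `U' = −μ_a U + 2ν M(t) e^{−μ_m t}`, `U(0) = 0`, where
`M(t) = (ν/(μ_m − μ_a))(e^{−μ_a t} − e^{−μ_m t})`. -/
theorem stmt7 (μa μm ν : ℝ) (h1 : μa ≠ μm) (h2 : μm ≠ 0) (h3 : μa ≠ 2 * μm)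
    (M U : ℝ → ℝ)
    (hM : M = fun t => (ν / (μm - μa)) * (Real.exp (-μa * t) - Real.exp (-μm * t)))
    (hU : U = fun t => (2 * ν ^ 2 / (μm - μa)) * Real.exp (-μa * t) *
      ((μa - μm) / (μm * (μa - 2 * μm)) - Real.exp (-μm * t) / μm
        - Real.exp ((μa - 2 * μm) * t) / (μa - 2 * μm))) :
    U 0 = 0 ∧ ∀ t : ℝ, HasDerivAt U (-μa * U t + 2 * ν * M t * Real.exp (-μm * t)) t := by
  have hmm : μm - μa ≠ 0 := sub_ne_zero.mpr (Ne.symm h1)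
  have ha2 : μa - 2 * μm ≠ 0 := sub_ne_zero.mpr h3
  subst hM hU
  constructor
  · simp only
    field_simp
    norm_num
    exact Or.inr (by ring)
  · intro t
    have e1 : HasDerivAt (fun t : ℝ => Real.exp (-μa * t)) (-μa * Real.exp (-μa * t)) t := by
      simpa [mul_comm] using ((hasDerivAt_id t).const_mul (-μa)).exp
    have e2 : HasDerivAt (fun t : ℝ => Real.exp (-μm * t)) (-μm * Real.exp (-μm * t)) t := by
      simpa [mul_comm] using ((hasDerivAt_id t).const_mul (-μm)).exp
    have e3 : HasDerivAt (fun t : ℝ => Real.exp ((μa - 2 * μm) * t))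
        ((μa - 2 * μm) * Real.exp ((μa - 2 * μm) * t)) t := by
      simpa [mul_comm] using ((hasDerivAt_id t).const_mul (μa - 2 * μm)).exp
    have hin : HasDerivAt (fun t : ℝ => (μa - μm) / (μm * (μa - 2 * μm)) - Real.exp (-μm * t) / μm
        - Real.exp ((μa - 2 * μm) * t) / (μa - 2 * μm))
        (0 - (-μm * Real.exp (-μm * t)) / μm
          - ((μa - 2 * μm) * Real.exp ((μa - 2 * μm) * t)) / (μa - 2 * μm)) t :=
      ((hasDerivAt_const t _).sub (e2.div_const μm)).sub (e3.div_const _)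
    have h := (e1.const_mul (2 * ν ^ 2 / (μm - μa))).mul hin
    have hC : Real.exp ((μa - 2 * μm) * t) = Real.exp (-μm * t) ^ 2 / Real.exp (-μa * t) := by
      rw [eq_div_iff (Real.exp_ne_zero _), sq, ← Real.exp_add, ← Real.exp_add]
      ring_nf
    refine h.congr_deriv ?_
    beta_reduce
    rw [hC]
    have ha : Real.exp (-μa * t) ≠ 0 := Real.exp_ne_zero _
    generalize Real.exp (-μa * t) = a at ha ⊢
    generalize Real.exp (-μm * t) = b
    field_simp
    ring
end

section
/- The function U(t) = (ν_m ν_n/(μ_n − μ_a)) e^{−μ_a t}[ (μ_a−μ_n)/(μ_m(μ_a−μ_m−μ_n)) − e^{−μ_m t}/μ_m − e^{(μ_a−μ_m−μ_n)t}/(μ_a−μ_m−μ_n) ] + (ν_m ν_n/(μ_m − μ_a)) e^{−μ_a t}[ (μ_a−μ_m)/(μ_n(μ_a−μ_m−μ_n)) − e^{−μ_n t}/μ_n − e^{(μ_a−μ_m−μ_n)t}/(μ_a−μ_m−μ_n) ] satisfies U'(t) = −μ_a U(t) + ν_m M_n(t) e^{−μ_m t} + ν_n M_m(t) e^{−μ_n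 t} with U(0)=0, where M_j(t) = (ν_j/(μ_j − μ_a))(e^{−μ_a t} − e^{−μ_j t}) for j ∈ {m,n}, assuming μ_a ≠ μ_m, μ_a ≠ μ_n, μ_m ≠ 0, μ_n ≠ 0, and μ_a ≠ μ_m + μ_n. -/
open Real

/-- the closed-form mixed second moment `U_{mn|a}(t)` satisfies
`U' = −μ_a U + ν_m M_n(t) e^{−μ_m t} + ν_n M_m(t) e^{−μ_n t}` with `U(0) = 0`, where
`M_j(t) = (ν_j/(μ_j − μ_a))(e^{−μ_a t} − e^{−μ_j t})` for `j ∈ {m, n}`. -/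
theorem stmt8 (μa μm μn νm νn : ℝ)
    (h1 : μa ≠ μm) (h2 : μa ≠ μn) (h3 : μm ≠ 0) (h4 : μn ≠ 0) (h5 : μa ≠ μm + μn)
    (Mm Mn U : ℝ → ℝ)
    (hMm : Mm = fun t => (νm / (μm - μa)) * (Real.exp (-μa * t) - Real.exp (-μm * t)))
    (hMn : Mn = fun t => (νn / (μn - μa)) * (Real.exp (-μa * t) - Real.exp (-μn * t)))
    (hU : U = fun t =>
      (νm * νn / (μn - μa)) * Real.exp (-μa * t) *
        ((μa - μn) / (μm * (μa - μm - μn)) - Real.exp (-μm * t) / μm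
          - Real.exp ((μa - μm - μn) * t) / (μa - μm - μn))
      + (νm * νn / (μm - μa)) * Real.exp (-μa * t) *
        ((μa - μm) / (μn * (μa - μm - μn)) - Real.exp (-μn * t) / μn
          - Real.exp ((μa - μm - μn) * t) / (μa - μm - μn))) :
    U 0 = 0 ∧ ∀ t : ℝ,
      HasDerivAt U
        (-μa * U t + νm * Mn t * Real.exp (-μm * t) + νn * Mm t * Real.exp (-μn * t)) t := by
  have hma : μm - μa ≠ 0 := sub_ne_zero.mpr (Ne.symm h1)
  have hna : μn - μa ≠ 0 := sub_ne_zero.mpr (Ne.symm h2)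
  have hc : μa - μm - μn ≠ 0 := by
    intro h; apply h5; linarith
  subst hMm hMn hU
  constructor
  · simp only
    norm_num
    field_simp
    ring
  · intro t
    have he : ∀ c : ℝ, HasDerivAt (fun t : ℝ => Real.exp (c * t)) (c * Real.exp (c * t)) t := by
      intro c
      simpa [mul_comm, Function.comp_def] using (Real.hasDerivAt_exp (c * t)).comp t
        ((hasDerivAt_id t).const_mul c)
    have hd :
        HasDerivAt (fun t : ℝ =>
          (νm * νn / (μn - μa)) * Real.exp (-μa * t) *
            ((μa - μn) / (μm * (μa - μm - μn)) - Real.exp (-μm * t) / μm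
              - Real.exp ((μa - μm - μn) * t) / (μa - μm - μn))
          + (νm * νn / (μm - μa)) * Real.exp (-μa * t) *
            ((μa - μm) / (μn * (μa - μm - μn)) - Real.exp (-μn * t) / μn
              - Real.exp ((μa - μm - μn) * t) / (μa - μm - μn)))
          ((νm * νn / (μn - μa)) * ((-μa) * Real.exp (-μa * t)) *
            ((μa - μn) / (μm * (μa - μm - μn)) - Real.exp (-μm * t) / μm
              - Real.exp ((μa - μm - μn) * t) / (μa - μm - μn))
            + (νm * νn / (μn - μa)) * Real.exp (-μa * t) *
              (0 - ((-μm) * Real.exp (-μm * t)) / μm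
                - ((μa - μm - μn) * Real.exp ((μa - μm - μn) * t)) / (μa - μm - μn))
          + ((νm * νn / (μm - μa)) * ((-μa) * Real.exp (-μa * t)) *
            ((μa - μm) / (μn * (μa - μm - μn)) - Real.exp (-μn * t) / μn
              - Real.exp ((μa - μm - μn) * t) / (μa - μm - μn))
            + (νm * νn / (μm - μa)) * Real.exp (-μa * t) *
              (0 - ((-μn) * Real.exp (-μn * t)) / μn
                - ((μa - μm - μn) * Real.exp ((μa - μm - μn) * t)) / (μa - μm - μn)))) t := by
      apply HasDerivAt.add
      · exact ((he (-μa)).const_mul (νm * νn / (μn - μa))).mul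
          ((((hasDerivAt_const t _).sub ((he (-μm)).div_const μm)).sub
            ((he (μa - μm - μn)).div_const (μa - μm - μn))))
      · exact ((he (-μa)).const_mul (νm * νn / (μm - μa))).mul
          ((((hasDerivAt_const t _).sub ((he (-μn)).div_const μn)).sub
            ((he (μa - μm - μn)).div_const (μa - μm - μn))))
    convert hd using 1
    have hR : Real.exp (-μa*t) * Real.exp ((μa - μm - μn) * t)
        = Real.exp (-μm*t) * Real.exp (-μn*t) := by
      rw [← Real.exp_add, ← Real.exp_add]; ring_nf
    have e1 : -μm * Real.exp (-μm*t) / μm = -Real.exp (-μm*t) := by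
      field_simp
    have e2 : (μa - μm - μn) * Real.exp ((μa - μm - μn)*t) / (μa - μm - μn)
        = Real.exp ((μa - μm - μn)*t) := by
      field_simp
    have e3 : -μn * Real.exp (-μn*t) / μn = -Real.exp (-μn*t) := by
      field_simp
    rw [e1, e2, e3]
    have e4 : (μa - μn) / (μm * (μa - μm - μn))
        = (μa - μn) / μm / (μa - μm - μn) := by rw [div_div]
    have e5 : (μa - μm) / (μn * (μa - μm - μn))
        = (μa - μm) / μn / (μa - μm - μn) := by rw [div_div]
    have e6 : (μa - μn) / μm = μa / μm - μn / μm := by ring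
    have e7 : (μa - μm) / μn = μa / μn - μm / μn := by ring
    have e8 : μn / μm * (1/μm)⁻¹ = μn * 1 := by
      rw [div_mul_eq_mul_div, one_div, inv_inv]; field_simp
    linear_combination (νm*νn/(μn-μa) + νm*νn/(μm-μa)) * hR
end
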